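/- For integers n ≥ k ≥ 1, the sum over subsets S ⊆ [n] containing n with |S| > k of C(|S|−2, k−1), plus the sum over subsets S ⊆ [n] containing n with |S| ≥ k of C(|S|−2, k−2), equals C(n−1, k−1)·2^{n−k}. -/

import Mathlib

open Finset

/-- The binomial coefficient with the paper's conventions for possibly negative
arguments: for `b ≥ 0` it is the usual (ring-valued) binomial coefficient, while for
`b < 0` it is `1` if `a = b` and `0` otherwise. -/
noncomputable def pCh (a b : ℤ) : ℤ :=
  if b < 0 then (if a = b then 1 else 0) else Ring.choose a b.toNat

lemma pCh_natCast (a b : ℕ) : pCh (a : ℤ) (b : ℤ) = (a.choose b : ℤ) := by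
  simp [pCh, Ring.choose_natCast]

lemma key_nat (m r : ℕ) :
    ∑ j ∈ range (m + 1), m.choose j * j.choose r = m.choose r * 2 ^ (m - r) := by
  rcases le_or_gt r m with h | h
  · have h1 : ∑ j ∈ range (m + 1), m.choose j * j.choose r
        = ∑ j ∈ Ico r (m + 1), m.choose j * j.choose r := by
      refine (Finset.sum_subset (fun j hj => ?_) (fun j hj hj' => ?_)).symm
      · simp only [mem_Ico] at hj; simp [mem_range, hj.2]
      · simp only [mem_range] at hj
        simp only [mem_Ico, not_and, not_lt] at hj'
        have : j < r := by omega
        simp [Nat.choose_eq_zero_of_lt this]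
    rw [h1, Finset.sum_Ico_eq_sum_range]
    have h2 : m + 1 - r = (m - r) + 1 := by omega
    rw [h2]
    have h3 : ∀ i ∈ range ((m - r) + 1),
        m.choose (r + i) * (r + i).choose r = m.choose r * (m - r).choose i := by
      intro i hi
      simp only [mem_range] at hi
      have hri : r + i ≤ m := by omega
      have := Nat.choose_mul (n := m) (Nat.le_add_right r i)
      simpa [Nat.add_sub_cancel_left] using this
    rw [Finset.sum_congr rfl h3, ← Finset.mul_sum, Nat.sum_range_choose]
  · have : ∀ j ∈ range (m + 1), m.choose j * j.choose r = 0 := by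
      intro j hj
      simp only [mem_range] at hj
      simp [Nat.choose_eq_zero_of_lt (by omega : j < r)]
    rw [Finset.sum_congr rfl this, Finset.sum_const_zero,
      Nat.choose_eq_zero_of_lt h, Nat.zero_mul]

lemma transfer (n : ℕ) (hn : 1 ≤ n) (f : ℕ → ℤ) (P : ℕ → Prop) [DecidablePred P] :
    ∑ S ∈ (Icc 1 n).powerset.filter (fun S => n ∈ S ∧ P S.card), f S.card
      = ∑ T ∈ (Icc 1 (n - 1)).powerset, (if P (T.card + 1) then f (T.card + 1) else 0) := by
  have hnotmem : n ∉ Icc 1 (n - 1) := by simp only [mem_Icc]; omega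
  have hIcc : Icc 1 n = insert n (Icc 1 (n - 1)) := by
    ext x; simp only [mem_Icc, mem_insert]; omega
  rw [← Finset.sum_filter]
  refine Finset.sum_nbij' (fun S => S.erase n) (fun T => insert n T) ?_ ?_ ?_ ?_ ?_
  · intro S hS
    simp only [mem_filter, mem_powerset] at hS ⊢
    obtain ⟨hsub, hnS, hP⟩ := hS
    constructor
    · intro x hx
      have hx' := hsub (Finset.erase_subset n S hx)
      simp only [mem_Icc] at hx' ⊢
      have : x ≠ n := Finset.ne_of_mem_erase hx
      omega
    · rwa [Finset.card_erase_of_mem hnS, Nat.sub_add_cancel]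
      exact Finset.card_pos.mpr ⟨n, hnS⟩
  · intro T hT
    simp only [mem_filter, mem_powerset] at hT ⊢
    obtain ⟨hsub, hP⟩ := hT
    have hnT : n ∉ T := fun h => hnotmem (hsub h)
    refine ⟨?_, Finset.mem_insert_self n T, ?_⟩
    · rw [hIcc]; exact Finset.insert_subset_insert n hsub
    · rwa [Finset.card_insert_of_notMem hnT]
  · intro S hS
    simp only [mem_filter, mem_powerset] at hS
    exact Finset.insert_erase hS.2.1
  · intro T hT
    simp only [mem_filter, mem_powerset] at hT
    exact Finset.erase_insert (fun h => hnotmem (hT.1 h))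
  · intro S hS
    simp only [mem_filter, mem_powerset] at hS
    obtain ⟨hsub, hnS, hP⟩ := hS
    rw [Finset.card_erase_of_mem hnS, Nat.sub_add_cancel (Finset.card_pos.mpr ⟨n, hnS⟩)]

lemma gval (k : ℕ) (hk : 1 ≤ k) (j : ℕ) :
    (if k < j + 1 then pCh ((j + 1 : ℤ) - 2) ((k : ℤ) - 1) else 0)
      + (if k ≤ j + 1 then pCh ((j + 1 : ℤ) - 2) ((k : ℤ) - 2) else 0)
      = (j.choose (k - 1) : ℤ) := by
  rcases Nat.eq_or_lt_of_le hk with h1 | h2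
  · -- k = 1
    subst_vars
    rcases Nat.eq_zero_or_pos j with hj | hj
    · subst hj
      norm_num [pCh]
    · have hj1 : ((j : ℤ) + 1) - 2 = ((j - 1 : ℕ) : ℤ) := by omega
      rw [if_pos (by omega), if_pos (by omega), hj1]
      have : ((1 : ℕ) : ℤ) - 1 = ((0 : ℕ) : ℤ) := by norm_num
      rw [show ((1:ℕ) : ℤ) - 1 = ((0:ℕ) : ℤ) by norm_num, pCh_natCast]
      have : pCh ((j - 1 : ℕ) : ℤ) (((1:ℕ) : ℤ) - 2) = 0 := by
        simp only [pCh]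
        rw [if_pos (by norm_num)]
        rw [if_neg (by omega)]
      rw [this]
      simp
  · -- k ≥ 2
    have hk2 : 2 ≤ k := h2
    have hc1 : ((k : ℤ) - 1) = ((k - 1 : ℕ) : ℤ) := by omega
    have hc2 : ((k : ℤ) - 2) = ((k - 2 : ℕ) : ℤ) := by omega
    rcases Nat.eq_zero_or_pos j with hj | hj
    · subst hj
      rw [if_neg (by omega), if_neg (by omega)]
      rw [Nat.choose_eq_zero_of_lt (by omega)]
      norm_num
    · have hj1 : ((j : ℤ) + 1) - 2 = ((j - 1 : ℕ) : ℤ) := by omega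
      rw [hj1, hc1, hc2, pCh_natCast, pCh_natCast]
      rcases lt_trichotomy (j + 1) k with h | h | h
      · rw [if_neg (by omega), if_neg (by omega)]
        rw [Nat.choose_eq_zero_of_lt (by omega)]
        norm_num
      · rw [if_neg (by omega), if_pos (by omega)]
        have : j - 1 = k - 2 := by omega
        rw [this, Nat.choose_self]
        have : j = k - 1 := by omega
        rw [this, Nat.choose_self]
        norm_num
      · rw [if_pos (by omega), if_pos (by omega)]
        have hjj : j = (j - 1) + 1 := by omega
        have hkk : k - 1 = (k - 2) + 1 := by omega
        rw [hjj, hkk, Nat.choose_succ_succ']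
        push_cast
        ring

/-- For `n ≥ k ≥ 1`, the sum over subsets `S ⊆ [n]` with `n ∈ S` and `|S| > k` of
`C(|S|−2, k−1)`, plus the sum over subsets `S ⊆ [n]` with `n ∈ S` and `|S| ≥ k` of
`C(|S|−2, k−2)`, equals `C(n−1, k−1)·2^{n−k}`. -/
theorem sum_over_subsets_containing_n (n k : ℕ) (hk : 1 ≤ k) (hkn : k ≤ n) :
    (∑ S ∈ (Finset.Icc 1 n).powerset.filter (fun S => n ∈ S ∧ k < S.card),
        pCh ((S.card : ℤ) - 2) ((k : ℤ) - 1)) +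
    (∑ S ∈ (Finset.Icc 1 n).powerset.filter (fun S => n ∈ S ∧ k ≤ S.card),
        pCh ((S.card : ℤ) - 2) ((k : ℤ) - 2)) =
    ((n - 1).choose (k - 1) : ℤ) * 2 ^ (n - k) := by
  have hn : 1 ≤ n := le_trans hk hkn
  rw [transfer n hn (fun c => pCh ((c : ℤ) - 2) ((k : ℤ) - 1)) (fun c => k < c),
    transfer n hn (fun c => pCh ((c : ℤ) - 2) ((k : ℤ) - 2)) (fun c => k ≤ c),
    ← Finset.sum_add_distrib]
  have hstep : ∀ T ∈ (Icc 1 (n - 1)).powerset,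
      ((if k < T.card + 1 then pCh ((T.card + 1 : ℤ) - 2) ((k : ℤ) - 1) else 0)
        + (if k ≤ T.card + 1 then pCh ((T.card + 1 : ℤ) - 2) ((k : ℤ) - 2) else 0))
      = ((T.card.choose (k - 1) : ℤ)) := fun T _ => gval k hk T.card
  calc ∑ T ∈ (Icc 1 (n - 1)).powerset,
        ((if k < T.card + 1 then pCh ((T.card : ℤ) + 1 - 2) ((k : ℤ) - 1) else 0)
          + (if k ≤ T.card + 1 then pCh ((T.card : ℤ) + 1 - 2) ((k : ℤ) - 2) else 0))
      = ∑ T ∈ (Icc 1 (n - 1)).powerset, ((T.card.choose (k - 1) : ℤ)) := by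
        apply Finset.sum_congr rfl
        intro T hT
        have := gval k hk T.card
        convert this using 3
    _ = ∑ j ∈ range (#(Icc 1 (n - 1)) + 1), ∑ T ∈ powersetCard j (Icc 1 (n - 1)),
          ((T.card.choose (k - 1) : ℤ)) := Finset.sum_powerset _ _
    _ = ∑ j ∈ range ((n - 1) + 1), ((n-1).choose j) • ((j.choose (k - 1) : ℤ)) := by
        rw [Nat.card_Icc]
        apply Finset.sum_congr (by norm_num)
        intro j hj
        rw [Finset.sum_powersetCard j (Icc 1 (n-1)) (fun c => ((c.choose (k-1) : ℤ)))]
        rw [Nat.card_Icc]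
        norm_num [smul_eq_mul, mul_comm]
    _ = ((∑ j ∈ range ((n - 1) + 1), (n-1).choose j * j.choose (k - 1) : ℕ) : ℤ) := by
        rw [Nat.cast_sum]
        apply Finset.sum_congr rfl
        intro j hj
        push_cast
        rw [nsmul_eq_mul]
    _ = ((n - 1).choose (k - 1) : ℤ) * 2 ^ (n - k) := by
        rw [key_nat (n - 1) (k - 1)]
        have : (n - 1) - (k - 1) = n - k := by omega
        rw [this]; push_cast; ring
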